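/- Let n ≥ 2 and β > 0, let α : [0,∞) → [0,∞) be continuous, and define D(γ) = √( e^{2β} + 2(n−1) e^{β(1+γ)} γ + (n−1) e^{2βγ} (1 + (n−2)γ) ). Let γ : [0,∞) → ℝ be a C¹ solution of the nGPT symmetric cosine-similarity ODE γ̇(t) = 2 α(t) e^{βγ(t)} (1 − γ(t)) ((n−1)γ(t) + 1) / D(γ(t)) with γ(0) = 0. Then 0 ≤ γ(t) ≤ 1 for all t ≥ 0, and 1 − γ(t) ≤ exp( − (2/(n e^{β})) ∫₀^t α(s) ds ). In particular, if ∫₀^∞ α(s) ds = ∞ then γ(t) → 1 as t → ∞. -/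

import Mathlib

open Filter Real intervalIntegral

/-- The denominator `D(γ)` of the nGPT/Peri-LN symmetric cosine-similarity ODE. -/
noncomputable def symDenom (n : ℕ) (β γ : ℝ) : ℝ :=
  Real.sqrt (Real.exp (2 * β) + 2 * (n - 1) * Real.exp (β * (1 + γ)) * γ +
    (n - 1) * Real.exp (2 * β * γ) * (1 + (n - 2) * γ))

/-- For `γ ∈ [0,1]` the denominator is positive. -/
lemma symDenom_pos (n : ℕ) (hn : 2 ≤ n) (β : ℝ) (hβ : 0 < β) (g : ℝ)
    (h0 : 0 ≤ g) (h1 : g ≤ 1) : 0 < symDenom n β g := by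
  have hn2 : (2:ℝ) ≤ (n:ℝ) := by exact_mod_cast hn
  apply Real.sqrt_pos.mpr
  have e1 := Real.exp_pos (2 * β)
  have e2 := (Real.exp_pos (β * (1 + g))).le
  have e3 := (Real.exp_pos (2 * β * g)).le
  nlinarith [mul_nonneg e2 h0, mul_nonneg e3 h0, mul_nonneg (mul_nonneg e3 h0) (by linarith : (0:ℝ) ≤ (n:ℝ) - 2)]

/-- For `γ ∈ [0,1]` the denominator is at most `n e^β`. -/
lemma symDenom_le (n : ℕ) (hn : 2 ≤ n) (β : ℝ) (hβ : 0 < β) (g : ℝ)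
    (h0 : 0 ≤ g) (h1 : g ≤ 1) : symDenom n β g ≤ (n:ℝ) * Real.exp β := by
  have hn2 : (2:ℝ) ≤ (n:ℝ) := by exact_mod_cast hn
  have hM : (0:ℝ) ≤ (n:ℝ) * Real.exp β := by positivity
  rw [symDenom, show (n:ℝ) * Real.exp β = Real.sqrt (((n:ℝ) * Real.exp β)^2) from
    (Real.sqrt_sq hM).symm]
  apply Real.sqrt_le_sqrt
  have hexp2 : Real.exp (2*β) = (Real.exp β)^2 := by
    rw [two_mul, Real.exp_add, sq]
  have he1 : Real.exp (β * (1 + g)) ≤ Real.exp (2 * β) :=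
    Real.exp_le_exp.mpr (by nlinarith)
  have he2 : Real.exp (2 * β * g) ≤ Real.exp (2 * β) :=
    Real.exp_le_exp.mpr (by nlinarith)
  have hpos1 : (0:ℝ) ≤ 2 * ((n:ℝ) - 1) * g := by nlinarith
  have hpos2 : (0:ℝ) ≤ ((n:ℝ) - 1) * (1 + ((n:ℝ) - 2) * g) := by nlinarith
  have hb1 : 2 * ((n:ℝ) - 1) * Real.exp (β * (1 + g)) * g ≤
      2 * ((n:ℝ) - 1) * Real.exp (2 * β) * g := by nlinarith
  have hb2 : ((n:ℝ) - 1) * Real.exp (2 * β * g) * (1 + ((n:ℝ) - 2) * g) ≤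
      ((n:ℝ) - 1) * Real.exp (2 * β) * (1 + ((n:ℝ) - 2) * g) := by nlinarith
  have hb3 : 1 + ((n:ℝ) - 2) * g ≤ (n:ℝ) - 1 := by nlinarith
  have hE := (Real.exp_pos (2 * β)).le
  calc Real.exp (2 * β) + 2 * ((n:ℝ) - 1) * Real.exp (β * (1 + g)) * g +
      ((n:ℝ) - 1) * Real.exp (2 * β * g) * (1 + ((n:ℝ) - 2) * g)
      ≤ Real.exp (2 * β) + 2 * ((n:ℝ) - 1) * Real.exp (2 * β) * 1 +
        ((n:ℝ) - 1) * Real.exp (2 * β) * ((n:ℝ) - 1) := by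
        have hK : (0:ℝ) ≤ ((n:ℝ) - 1) * Real.exp (2 * β) := by nlinarith
        nlinarith [mul_le_mul_of_nonneg_left hb3 hK, mul_le_mul_of_nonneg_left h1 hK]
    _ = (n:ℝ)^2 * Real.exp (2 * β) := by ring
    _ = ((n:ℝ) * Real.exp β)^2 := by rw [hexp2]; ring

/-- nGPT symmetric cosine-similarity ODE: Grönwall bound and synchronization
under divergence of `∫ α`. -/
theorem nGPT_symmetric_ODE (n : ℕ) (hn : 2 ≤ n) (β : ℝ) (hβ : 0 < β)
    (α : ℝ → ℝ) (hαcont : Continuous α) (hαnonneg : ∀ t, 0 ≤ t → 0 ≤ α t)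
    (γ : ℝ → ℝ) (hγ0 : γ 0 = 0)
    (hdyn : ∀ t, 0 ≤ t → HasDerivAt γ
      (2 * α t * Real.exp (β * γ t) * (1 - γ t) * ((n - 1) * γ t + 1) /
        symDenom n β (γ t)) t) :
    (∀ t, 0 ≤ t → 0 ≤ γ t ∧ γ t ≤ 1) ∧
    (∀ t, 0 ≤ t →
      1 - γ t ≤ Real.exp (-(2 / (n * Real.exp β)) * ∫ s in (0:ℝ)..t, α s)) ∧
    (Tendsto (fun T => ∫ s in (0:ℝ)..T, α s) atTop atTop →
      Tendsto γ atTop (nhds 1)) := by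
  have hn2 : (2:ℝ) ≤ (n:ℝ) := by exact_mod_cast hn
  have hcontAt : ∀ t, 0 ≤ t → ContinuousAt γ t := fun t ht => (hdyn t ht).continuousAt
  -- upper bound γ ≤ 1
  have hub : ∀ t, 0 ≤ t → γ t ≤ 1 := by
    intro T hT
    by_contra hcon
    push_neg at hcon
    have hγcont : ContinuousOn γ (Set.Icc (0:ℝ) T) :=
      fun t ht => (hcontAt t ht.1).continuousWithinAt
    set S := Set.Icc (0:ℝ) T ∩ γ ⁻¹' (Set.Iic 1) with hSdef
    have hSclosed : IsClosed S :=
      hγcont.preimage_isClosed_of_isClosed isClosed_Icc isClosed_Iic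
    have h0S : (0:ℝ) ∈ S := ⟨⟨le_refl _, hT⟩, by simp [hγ0]⟩
    have hbdd : BddAbove S := ⟨T, fun x hx => hx.1.2⟩
    set t1 := sSup S with ht1def
    have ht1S : t1 ∈ S := hSclosed.csSup_mem ⟨0, h0S⟩ hbdd
    have ht10 : 0 ≤ t1 := ht1S.1.1
    have ht1T : t1 ≤ T := ht1S.1.2
    have ht1le : γ t1 ≤ 1 := ht1S.2
    have hgt : ∀ t, t1 < t → t ≤ T → 1 < γ t := by
      intro t h1 h2
      by_contra hle
      push_neg at hle
      exact absurd (le_csSup hbdd ⟨⟨ht10.trans h1.le, h2⟩, hle⟩) (not_le.mpr h1)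
    have hanti : AntitoneOn γ (Set.Icc t1 T) := by
      apply antitoneOn_of_deriv_nonpos (convex_Icc _ _)
        (hγcont.mono (Set.Icc_subset_Icc ht10 le_rfl))
      · intro x hx
        rw [interior_Icc] at hx
        exact ((hdyn x (ht10.trans hx.1.le)).differentiableAt).differentiableWithinAt
      · intro x hx
        rw [interior_Icc] at hx
        have hx0 : 0 ≤ x := ht10.trans hx.1.le
        rw [(hdyn x hx0).deriv]
        have h1x : 1 < γ x := hgt x hx.1 hx.2.le
        apply div_nonpos_of_nonpos_of_nonneg _ (Real.sqrt_nonneg _)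
        have hα := hαnonneg x hx0
        have hE := (Real.exp_pos (β * γ x)).le
        have e1 : 0 ≤ 2 * α x * Real.exp (β * γ x) := by positivity
        have e2 : 0 ≤ ((n:ℝ) - 1) * γ x + 1 := by nlinarith
        have e3 : 1 - γ x ≤ 0 := by linarith
        nlinarith [mul_nonneg e1 e2]
    have := hanti (Set.left_mem_Icc.mpr ht1T) (Set.right_mem_Icc.mpr ht1T) ht1T
    linarith
  -- lower bound γ ≥ 0
  have hlb : ∀ t, 0 ≤ t → 0 ≤ γ t := by
    intro T hT
    by_contra hcon
    push_neg at hcon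
    have hn1 : (0:ℝ) < (n:ℝ) - 1 := by linarith
    set δ := min (-γ T) (1 / (2 * ((n:ℝ) - 1))) with hδdef
    have hδpos : 0 < δ := lt_min (by linarith) (by positivity)
    have hδle : δ ≤ 1 / (2 * ((n:ℝ) - 1)) := min_le_right _ _
    have hδT : γ T ≤ -δ := by
      have := min_le_left (-γ T) (1 / (2 * ((n:ℝ) - 1)))
      linarith [hδdef ▸ this]
    have hγcont : ContinuousOn γ (Set.Icc (0:ℝ) T) :=
      fun t ht => (hcontAt t ht.1).continuousWithinAt
    set S := Set.Icc (0:ℝ) T ∩ γ ⁻¹' (Set.Iic (-δ)) with hSdef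
    have hSclosed : IsClosed S :=
      hγcont.preimage_isClosed_of_isClosed isClosed_Icc isClosed_Iic
    have hTS : T ∈ S := ⟨⟨hT, le_refl _⟩, hδT⟩
    have hbddb : BddBelow S := ⟨0, fun x hx => hx.1.1⟩
    set t1 := sInf S with ht1def
    have ht1S : t1 ∈ S := hSclosed.csInf_mem ⟨T, hTS⟩ hbddb
    have ht10 : 0 ≤ t1 := ht1S.1.1
    have ht1T : t1 ≤ T := ht1S.1.2
    have ht1le : γ t1 ≤ -δ := ht1S.2
    have hgt : ∀ t, 0 ≤ t → t < t1 → -δ < γ t := by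
      intro t h1 h2
      by_contra hle
      push_neg at hle
      exact absurd (csInf_le hbddb ⟨⟨h1, h2.le.trans ht1T⟩, hle⟩) (not_le.mpr h2)
    have hmono : MonotoneOn γ (Set.Icc 0 t1) := by
      apply monotoneOn_of_deriv_nonneg (convex_Icc _ _)
        (hγcont.mono (Set.Icc_subset_Icc le_rfl ht1T))
      · intro x hx
        rw [interior_Icc] at hx
        exact ((hdyn x hx.1.le).differentiableAt).differentiableWithinAt
      · intro x hx
        rw [interior_Icc] at hx
        have hx0 : 0 ≤ x := hx.1.le
        rw [(hdyn x hx0).deriv]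
        have hlo : -δ < γ x := hgt x hx0 hx.2
        have hhi : γ x ≤ 1 := hub x hx0
        apply div_nonneg _ (Real.sqrt_nonneg _)
        have hα := hαnonneg x hx0
        have hE := (Real.exp_pos (β * γ x)).le
        have e1 : 0 ≤ 2 * α x * Real.exp (β * γ x) := by positivity
        have hδsmall : ((n:ℝ) - 1) * δ ≤ 1 / 2 := by
          have : ((n:ℝ) - 1) * δ ≤ ((n:ℝ) - 1) * (1 / (2 * ((n:ℝ) - 1))) :=
            mul_le_mul_of_nonneg_left hδle hn1.le
          calc ((n:ℝ) - 1) * δ ≤ ((n:ℝ) - 1) * (1 / (2 * ((n:ℝ) - 1))) := this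
            _ = 1 / 2 := by field_simp
        have e2 : 0 ≤ ((n:ℝ) - 1) * γ x + 1 := by nlinarith
        have e3 : 0 ≤ 1 - γ x := by linarith
        nlinarith [mul_nonneg e1 e2]
    have := hmono (Set.left_mem_Icc.mpr ht10) (Set.right_mem_Icc.mpr ht10) ht10
    rw [hγ0] at this
    linarith
  refine ⟨fun t ht => ⟨hlb t ht, hub t ht⟩, ?_⟩
  -- Grönwall bound
  have hnpos : (0:ℝ) < (n:ℝ) := by linarith
  set M := (n:ℝ) * Real.exp β with hMdef
  have hMpos : 0 < M := by positivity
  set c := 2 / M with hcdef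
  have hcpos : 0 < c := by positivity
  set I := fun t => ∫ s in (0:ℝ)..t, α s with hIdef
  have hIderiv : ∀ t : ℝ, HasDerivAt I (α t) t := by
    intro t
    exact intervalIntegral.integral_hasDerivAt_right
      (hαcont.intervalIntegrable 0 t)
      hαcont.aestronglyMeasurable.stronglyMeasurableAtFilter
      hαcont.continuousAt
  set u := fun t => (1 - γ t) * Real.exp (c * I t) with hudef
  have huderiv : ∀ t, 0 ≤ t → HasDerivAt u
      ((0 - (2 * α t * Real.exp (β * γ t) * (1 - γ t) * ((n - 1) * γ t + 1) /
        symDenom n β (γ t))) * Real.exp (c * I t) +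
        (1 - γ t) * (Real.exp (c * I t) * (c * α t))) t := by
    intro t ht
    exact ((hasDerivAt_const t 1).sub (hdyn t ht)).mul
      (((hIderiv t).const_mul c).exp)
  -- key pointwise inequality
  have hkey : ∀ t, 0 ≤ t → c * α t * (1 - γ t) ≤
      2 * α t * Real.exp (β * γ t) * (1 - γ t) * ((n - 1) * γ t + 1) /
        symDenom n β (γ t) := by
    intro t ht
    have h0 : 0 ≤ γ t := hlb t ht
    have h1 : γ t ≤ 1 := hub t ht
    have hDpos := symDenom_pos n hn β hβ (γ t) h0 h1
    have hDle := symDenom_le n hn β hβ (γ t) h0 h1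
    have hα := hαnonneg t ht
    have hE1 : 1 ≤ Real.exp (β * γ t) := Real.one_le_exp (by positivity)
    have hN : 2 * α t * (1 - γ t) ≤
        2 * α t * Real.exp (β * γ t) * (1 - γ t) * ((n - 1) * γ t + 1) := by
      nlinarith [mul_nonneg hα (sub_nonneg.mpr h1), mul_nonneg (mul_nonneg hα (sub_nonneg.mpr h1)) h0,
        mul_nonneg (mul_nonneg (mul_nonneg hα (sub_nonneg.mpr h1)) h0) (by linarith : (0:ℝ) ≤ (n:ℝ) - 1)]
    have hNnn : 0 ≤ 2 * α t * (1 - γ t) := by nlinarith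
    have hNnn2 : 0 ≤ 2 * α t * Real.exp (β * γ t) * (1 - γ t) * ((n - 1) * γ t + 1) :=
      le_trans hNnn hN
    calc c * α t * (1 - γ t) = 2 * α t * (1 - γ t) / M := by
          rw [hcdef]; ring
      _ ≤ 2 * α t * Real.exp (β * γ t) * (1 - γ t) * ((n - 1) * γ t + 1) / M :=
          div_le_div_of_nonneg_right hN hMpos.le
      _ ≤ 2 * α t * Real.exp (β * γ t) * (1 - γ t) * ((n - 1) * γ t + 1) /
          symDenom n β (γ t) := div_le_div_of_nonneg_left hNnn2 hDpos hDle
  have hIcont : Continuous I := by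
    exact continuous_iff_continuousAt.mpr fun t => (hIderiv t).continuousAt
  have huanti : AntitoneOn u (Set.Ici 0) := by
    apply antitoneOn_of_deriv_nonpos (convex_Ici 0)
    · exact (continuousOn_const.sub (fun t ht => (hcontAt t ht).continuousWithinAt)).mul
        (((continuous_const.mul hIcont).rexp).continuousOn)
    · intro x hx
      rw [interior_Ici] at hx
      exact (huderiv x (le_of_lt hx)).differentiableAt.differentiableWithinAt
    · intro x hx
      rw [interior_Ici] at hx
      have hx0 : 0 ≤ x := hx.le
      rw [(huderiv x hx0).deriv]
      have hk := hkey x hx0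
      have hEpos := (Real.exp_pos (c * I x)).le
      nlinarith [mul_le_mul_of_nonneg_right hk hEpos]
  have hu0 : u 0 = 1 := by
    simp [hudef, hγ0, hIdef, intervalIntegral.integral_same]
  have hbound : ∀ t, 0 ≤ t →
      1 - γ t ≤ Real.exp (-(2 / (n * Real.exp β)) * ∫ s in (0:ℝ)..t, α s) := by
    intro t ht
    have hut : u t ≤ 1 := by
      rw [← hu0]
      exact huanti (Set.self_mem_Ici) ht ht
    have hEpos : (0:ℝ) < Real.exp (c * I t) := Real.exp_pos _
    have : 1 - γ t ≤ 1 / Real.exp (c * I t) := (le_div_iff₀ hEpos).mpr hut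
    rw [one_div, ← Real.exp_neg] at this
    convert this using 2
    rw [hcdef, hMdef, hIdef]
    ring
  refine ⟨hbound, ?_⟩
  -- convergence
  intro hdiv
  have hcI : Tendsto (fun t => c * I t) atTop atTop := hdiv.const_mul_atTop hcpos
  have hexp0 : Tendsto (fun t => Real.exp (-(c * I t))) atTop (nhds 0) :=
    Real.tendsto_exp_atBot.comp (tendsto_neg_atTop_atBot.comp hcI)
  have hlow : Tendsto (fun t => 1 - Real.exp (-(c * I t))) atTop (nhds 1) := by
    have h1 : Tendsto (fun _ : ℝ => (1:ℝ)) atTop (nhds 1) := tendsto_const_nhds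
    simpa using h1.sub hexp0
  apply tendsto_of_tendsto_of_tendsto_of_le_of_le' hlow tendsto_const_nhds
  · filter_upwards [eventually_ge_atTop (0:ℝ)] with t ht
    have := hbound t ht
    have heq : -(2 / (↑n * Real.exp β)) * ∫ s in (0:ℝ)..t, α s = -(c * I t) := by
      rw [hcdef, hMdef, hIdef]; ring
    rw [heq] at this
    linarith
  · filter_upwards [eventually_ge_atTop (0:ℝ)] with t ht
    exact hub t ht
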